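/- Let Λ be a graph and Λ' a subgraph of Λ. If Λ is a strong forest relative to Λ', then the quotient graph Λ/Λ' is a forest. -/

import Mathlib

/-- A combinatorial graph (Serre style): edges come with a fixed-point-free
reversal involution; loops and multiple edges are allowed. -/
structure SGraph where
  V : Type
  E : Type
  init : E → V
  bar : E → E
  bar_bar : ∀ e, bar (bar e) = e
  bar_ne : ∀ e, bar e ≠ e

namespace SGraph

variable (G : SGraph)

/-- Terminal vertex of an edge. -/
def term (e : G.E) : G.V := G.init (G.bar e)

/-- Consecutive edges of the list match up. -/
def IsChain (l : List G.E) : Prop :=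
  List.Chain' (fun e f => G.term e = G.init f) l

/-- A cycle: a nonempty closed edge path. -/
def IsCycle (l : List G.E) : Prop :=
  l ≠ [] ∧ G.IsChain l ∧
    ∀ e f, l.head? = some e → l.getLast? = some f → G.term f = G.init e

/-- A reduced cycle: no edge is followed (cyclically) by its reverse. -/
def IsReducedCycle (l : List G.E) : Prop :=
  G.IsCycle l ∧ List.Chain' (fun e f => f ≠ G.bar e) l ∧
    ∀ e f, l.head? = some e → l.getLast? = some f → e ≠ G.bar f

/-- A graph is a forest if it contains no reduced cycle. -/
def IsForestGraph : Prop := ∀ l, ¬ G.IsReducedCycle l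

/-- A subgraph: a set of vertices and a set of edges, closed under reversal,
with endpoints among the chosen vertices. -/
structure Subgraph (G : SGraph) where
  verts : Set G.V
  edges : Set G.E
  bar_mem : ∀ ⦃e⦄, e ∈ edges → G.bar e ∈ edges
  init_mem : ∀ ⦃e⦄, e ∈ edges → G.init e ∈ verts

variable {G}

namespace Subgraph

/-- Subgraph containment. -/
def le (H K : Subgraph G) : Prop := H.verts ⊆ K.verts ∧ H.edges ⊆ K.edges

/-- Intersection of two subgraphs. -/
def inter (H K : Subgraph G) : Subgraph G where
  verts := H.verts ∩ K.verts
  edges := H.edges ∩ K.edges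
  bar_mem := fun _ he => ⟨H.bar_mem he.1, K.bar_mem he.2⟩
  init_mem := fun _ he => ⟨H.init_mem he.1, K.init_mem he.2⟩

/-- All edges of the list lie in the subgraph. -/
def EdgesIn (H : Subgraph G) (l : List G.E) : Prop := ∀ e ∈ l, e ∈ H.edges

/-- A reduced cycle contained in the subgraph. -/
def IsReducedCycleIn (H : Subgraph G) (l : List G.E) : Prop :=
  G.IsReducedCycle l ∧ H.EdgesIn l

/-- A subgraph is a forest if it contains no reduced cycle. -/
def IsForest (H : Subgraph G) : Prop := ∀ l, ¬ H.IsReducedCycleIn l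

/-- Reachability inside a subgraph by edge paths. -/
inductive Reaches (H : Subgraph G) : G.V → G.V → Prop
  | refl (v : G.V) (hv : v ∈ H.verts) : Reaches H v v
  | step (e : G.E) (he : e ∈ H.edges) {q : G.V} (h : Reaches H (G.term e) q) :
      Reaches H (G.init e) q

/-- A subgraph is connected if it is nonempty and any two of its vertices are
joined by an edge path in it. -/
def Connected (H : Subgraph G) : Prop :=
  H.verts.Nonempty ∧ ∀ p ∈ H.verts, ∀ q ∈ H.verts, H.Reaches p q

/-- A tree is a connected forest. -/
def IsTree (H : Subgraph G) : Prop := H.IsForest ∧ H.Connected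

/-- `C` is a connected component of `H`: its vertices form a reachability class
of `H` and its edges are the induced ones. -/
def IsCompOf (C H : Subgraph G) : Prop :=
  ∃ v ∈ H.verts, C.verts = {w | H.Reaches v w} ∧
    C.edges = {e | e ∈ H.edges ∧ G.init e ∈ C.verts}

/-- `H` is a forest relative to `H'`: every reduced cycle of `H` is contained
in `H'`. -/
def ForestRel (H H' : Subgraph G) : Prop :=
  ∀ l, H.IsReducedCycleIn l → H'.EdgesIn l

/-- `H` is a strong forest relative to `H'`: a relative forest such that each
component of `H` meets `H'` in an empty or connected subgraph. -/
def StrongForestRel (H H' : Subgraph G) : Prop :=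
  H.ForestRel H' ∧
    ∀ C : Subgraph G, C.IsCompOf H → (C.inter H').verts = ∅ ∨ (C.inter H').Connected

/-- Euler characteristic: number of vertices minus number of (geometric)
edges; each geometric edge corresponds to a pair `{e, ē}`. -/
noncomputable def eulerChar (H : Subgraph G) : ℤ :=
  (H.verts.ncard : ℤ) - ((H.edges.ncard / 2 : ℕ) : ℤ)

/-- A walk in `H` from `p` to `q`, given as its list of traversed edges. -/
def IsWalk (H : Subgraph G) (p q : G.V) (l : List G.E) : Prop :=
  H.EdgesIn l ∧ G.IsChain l ∧
    (∀ e, l.head? = some e → G.init e = p) ∧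
    (∀ e, l.getLast? = some e → G.term e = q) ∧
    (l = [] → p = q ∧ p ∈ H.verts)

/-- The weight-0 subgraph of a zero/one-weighted subgraph: all of its vertices
together with its edges of weight 0. -/
def zeroSub (H : Subgraph G) (ω : G.E → ℕ) (hbar : ∀ e, ω (G.bar e) = ω e) :
    Subgraph G where
  verts := H.verts
  edges := {e | e ∈ H.edges ∧ ω e = 0}
  bar_mem := fun e he => ⟨H.bar_mem he.1, by rw [hbar]; exact he.2⟩
  init_mem := fun _ he => H.init_mem he.1

end Subgraph

/-- The full subgraph of a graph. -/
def full (G : SGraph) : Subgraph G where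
  verts := Set.univ
  edges := Set.univ
  bar_mem := fun _ _ => Set.mem_univ _
  init_mem := fun _ _ => Set.mem_univ _

open Classical in
/-- The quotient graph `G/H'` obtained by identifying the subgraph `H'` to a
single vertex `∗` (represented by `none`): its vertices are the vertices of
`G` not in `H'` together with `∗`; its edges are the edges of `G` not in `H'`,
with endpoints in `H'` replaced by `∗`. -/
noncomputable def quot (G : SGraph) (H' : Subgraph G) : SGraph where
  V := Option {v : G.V // v ∉ H'.verts}
  E := {e : G.E // e ∉ H'.edges}
  init e := if h : G.init e.1 ∈ H'.verts then none else some ⟨G.init e.1, h⟩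
  bar e := ⟨G.bar e.1, fun hc => e.2 (by simpa [G.bar_bar] using H'.bar_mem hc)⟩
  bar_bar e := Subtype.ext (G.bar_bar e.1)
  bar_ne e := fun hc => G.bar_ne e.1 (congrArg Subtype.val hc)

end SGraph

set_option linter.deprecated false in
@[simp] theorem List.chain'_nil {α : Type*} {R : α → α → Prop} : List.Chain' R [] :=
  List.isChain_nil

set_option linter.deprecated false in
@[simp] theorem List.chain'_singleton {α : Type*} {R : α → α → Prop} (a : α) :
    List.Chain' R [a] :=
  List.isChain_singleton a

set_option linter.deprecated false in
theorem List.chain'_cons {α : Type*} {R : α → α → Prop} {x y : α} {l : List α} :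
    List.Chain' R (x :: y :: l) ↔ R x y ∧ List.Chain' R (y :: l) :=
  List.isChain_cons_cons

set_option linter.deprecated false in
theorem List.chain'_cons' {α : Type*} {R : α → α → Prop} {x : α} {l : List α} :
    List.Chain' R (x :: l) ↔ (∀ y ∈ List.head? l, R x y) ∧ List.Chain' R l :=
  List.isChain_cons

set_option linter.deprecated false in
theorem List.chain'_append {α : Type*} {R : α → α → Prop} {l₁ l₂ : List α} :
    List.Chain' R (l₁ ++ l₂) ↔ List.Chain' R l₁ ∧ List.Chain' R l₂ ∧
      ∀ x ∈ l₁.getLast?, ∀ y ∈ l₂.head?, R x y :=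
  List.isChain_append

set_option linter.deprecated false in
theorem List.chain'_map {α β : Type*} {R : α → α → Prop} (f : β → α) {l : List β} :
    List.Chain' R (List.map f l) ↔ List.Chain' (fun a b : β => R (f a) (f b)) l :=
  List.isChain_map f

set_option linter.deprecated false in
theorem List.chain'_iff_get {α : Type*} {R : α → α → Prop} {l : List α} :
    List.Chain' R l ↔ ∀ (i : ℕ) (h : i < List.length l - 1),
      R (List.get l ⟨i, by omega⟩) (List.get l ⟨i + 1, by omega⟩) := by
  show List.IsChain R l ↔ _
  rw [List.isChain_iff_getElem]
  exact ⟨fun h i hi => h i (by omega), fun h i hi => h i (by omega)⟩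

set_option linter.deprecated false in
theorem List.Chain'.tail {α : Type*} {R : α → α → Prop} {l : List α} (h : List.Chain' R l) :
    List.Chain' R l.tail :=
  List.IsChain.tail h

set_option linter.deprecated false in
theorem List.Chain'.imp {α : Type*} {R S : α → α → Prop} (H : ∀ a b, R a b → S a b)
    {l : List α} (h : List.Chain' R l) : List.Chain' S l :=
  List.IsChain.imp H h

set_option linter.deprecated false in
theorem List.Chain'.prefix {α : Type*} {R : α → α → Prop} {l l₁ : List α}
    (h : List.Chain' R l) (h' : l₁ <+: l) : List.Chain' R l₁ :=
  List.IsChain.prefix h h'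

namespace SGraph

variable {G : SGraph}

theorem Subgraph.Reaches.trans {H : Subgraph G} {p q r : G.V}
    (h1 : H.Reaches p q) (h2 : H.Reaches q r) : H.Reaches p r := by
  induction h1 with
  | refl v hv => exact h2
  | step e he h ih => exact .step e he (ih h2)

/-- A walk predicate on edge lists: edges in `S`, chained, from `p` to `q`. -/
def Walk (G : SGraph) (S : Set G.E) (p q : G.V) (l : List G.E) : Prop :=
  (∀ e ∈ l, e ∈ S) ∧ G.IsChain l ∧
    (∀ e, l.head? = some e → G.init e = p) ∧
    (∀ e, l.getLast? = some e → G.term e = q) ∧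
    (l = [] → p = q)

theorem walk_of_reaches {H : Subgraph G} {p q : G.V} (h : H.Reaches p q) :
    ∃ l, G.Walk H.edges p q l := by
  induction h with
  | refl v hv => exact ⟨[], by simp [Walk, IsChain]⟩
  | step e he h ih =>
    obtain ⟨l, hS, hc, hh, hl, he0⟩ := ih
    refine ⟨e :: l, ?_, ?_, ?_, ?_, ?_⟩
    · rintro f hf
      rcases List.mem_cons.mp hf with rfl | hf
      · exact he
      · exact hS f hf
    · cases l with
      | nil => simp [IsChain]
      | cons g t =>
        exact List.chain'_cons.mpr ⟨(hh g rfl).symm, hc⟩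
    · rintro f hf; simp at hf; subst hf; rfl
    · intro f hf
      cases l with
      | nil => simp at hf; subst hf; exact (he0 rfl).symm ▸ rfl
      | cons g t => rw [List.getLast?_cons_cons] at hf; exact hl f hf
    · simp

theorem reaches_of_walk {p q : G.V} {l : List G.E} (h : G.Walk Set.univ p q l) :
    (G.full).Reaches p q := by
  induction l generalizing p with
  | nil => exact h.2.2.2.2 rfl ▸ .refl p (Set.mem_univ p)
  | cons e t ih =>
    obtain ⟨hS, hc, hh, hl, he0⟩ := h
    have hp : G.init e = p := hh e rfl
    subst hp
    refine .step e (Set.mem_univ e) (ih ⟨fun f hf => Set.mem_univ f, hc.tail, ?_, ?_, ?_⟩)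
    · intro f hf
      cases t with
      | nil => simp at hf
      | cons g s => simp at hf; subst hf; exact (List.chain'_cons.mp hc).1.symm
    · intro f hf
      cases t with
      | nil => simp at hf
      | cons g s => exact hl f (by rw [List.getLast?_cons_cons]; exact hf)
    · rintro rfl
      have := hl e rfl; simpa using this

end SGraph
namespace SGraph

variable {G : SGraph}

theorem term_bar (e : G.E) : G.term (G.bar e) = G.init e := by
  simp [term, G.bar_bar]

theorem reduce_walk {S : Set G.E} :
    ∀ (n : ℕ) (l : List G.E), l.length ≤ n → ∀ p q, G.Walk S p q l →
    ∃ l', G.Walk S p q l' ∧ List.Chain' (fun e f => f ≠ G.bar e) l' := by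
  intro n
  induction n with
  | zero =>
    intro l hl p q hw
    rw [Nat.le_zero, List.length_eq_zero_iff] at hl
    exact ⟨l, hw, by subst hl; simp⟩
  | succ n ih =>
    intro l hl p q hw
    match l with
    | [] => exact ⟨[], hw, by simp⟩
    | [e] => exact ⟨[e], hw, by simp⟩
    | e :: f :: t =>
      obtain ⟨hS, hc, hh, hg, -⟩ := hw
      have hpe : G.init e = p := hh e rfl
      have hef : G.term e = G.init f := (List.chain'_cons.mp hc).1
      by_cases hbar : f = G.bar e
      · -- cancel e, f
        have htf : G.term f = p := by rw [hbar, term_bar, hpe]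
        have hwt : G.Walk S p q t := by
          refine ⟨fun x hx => hS x (by simp [hx]), hc.tail.tail, ?_, ?_, ?_⟩
          · intro x hx
            have := (List.chain'_cons.mp hc).2
            rw [List.chain'_cons'] at this
            exact (this.1 x hx) ▸ htf
          · intro x hx
            refine hg x ?_
            cases t with
            | nil => simp at hx
            | cons a s => simpa [List.getLast?_cons_cons] using hx
          · rintro rfl
            have := hg f (by simp)
            rw [htf] at this; exact this
        exact ih t (by simp at hl; omega) p q hwt
      · -- keep e, reduce the rest
        have hwrest : G.Walk S (G.term e) q (f :: t) := by
          refine ⟨fun x hx => hS x (by simp [hx]), hc.tail, ?_, ?_, by simp⟩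
          · intro x hx; simp at hx; subst hx; exact hef.symm
          · intro x hx; exact hg x (by rw [List.getLast?_cons_cons]; exact hx)
        obtain ⟨l', ⟨hS', hc', hh', hg', he'⟩, hred'⟩ :=
          ih (f :: t) (by simpa using Nat.le_of_succ_le_succ hl) (G.term e) q hwrest
        match l' with
        | [] =>
          refine ⟨[e], ⟨fun x hx => hS x (by simp at hx; simp [hx]), by simp [IsChain], ?_, ?_, by simp⟩, by simp⟩
          · intro x hx; simp at hx; subst hx; exact hpe
          · intro x hx; simp at hx; subst hx; exact (he' rfl) ▸ rfl
        | g :: r =>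
          by_cases hgb : g = G.bar e
          · -- drop e and g
            refine ⟨r, ⟨fun x hx => hS' x (by simp [hx]), hc'.tail, ?_, ?_, ?_⟩, hred'.tail⟩
            · intro x hx
              have := List.chain'_cons'.mp hc'
              have h2 := this.1 x hx
              rw [← h2, hgb, term_bar, hpe]
            · intro x hx
              refine hg' x ?_
              cases r with
              | nil => simp at hx
              | cons a s => simpa [List.getLast?_cons_cons] using hx
            · rintro rfl
              have := hg' g (by simp)
              rw [hgb, term_bar, hpe] at this; exact this
          · refine ⟨e :: g :: r, ⟨?_, ?_, ?_, ?_, by simp⟩, ?_⟩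
            · intro x hx
              rcases List.mem_cons.mp hx with rfl | hx
              · exact hS x (by simp)
              · exact hS' x hx
            · exact List.chain'_cons.mpr ⟨(hh' g rfl).symm, hc'⟩
            · intro x hx; simp at hx; subst hx; exact hpe
            · intro x hx; exact hg' x (by rw [List.getLast?_cons_cons] at hx; exact hx)
            · exact List.chain'_cons.mpr ⟨hgb, hred'⟩

end SGraph
namespace SGraph

variable {G : SGraph}

/-- The connected component of `v` in the full graph. -/
def comp (G : SGraph) (v : G.V) : Subgraph G where
  verts := {w | (G.full).Reaches v w}
  edges := {e | (G.full).Reaches v (G.init e)}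
  bar_mem := fun e he => by
    have h1 : (G.full).Reaches (G.init e) (G.init (G.bar e)) :=
      .step e (Set.mem_univ e) (.refl _ (Set.mem_univ _))
    exact Subgraph.Reaches.trans he h1
  init_mem := fun e he => he

theorem comp_isCompOf (v : G.V) : (G.comp v).IsCompOf G.full :=
  ⟨v, Set.mem_univ v, rfl, by
    ext e
    simp [comp, full, Subgraph.IsCompOf]⟩

/-- Rotation preserves reduced cycles. -/
theorem rot {a b : List G.E} (h : G.IsReducedCycle (a ++ b)) :
    G.IsReducedCycle (b ++ a) := by
  obtain ⟨⟨hne, hc, hcl⟩, hr, hrl⟩ := h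
  match a, b with
  | [], b => simpa using ⟨⟨hne, hc, hcl⟩, hr, hrl⟩
  | a, [] => simpa using ⟨⟨by simpa using hne, by simpa using hc, by simpa using hcl⟩,
      by simpa using hr, by simpa using hrl⟩
  | x :: a', y :: b' =>
    have hha : (x :: a' ++ (y :: b')).head? = some x := rfl
    have hgb : ((x :: a') ++ y :: b').getLast? = (y :: b').getLast? := by
      rw [List.getLast?_append_of_ne_nil]; simp
    rw [IsChain, List.chain'_append] at hc
    rw [List.chain'_append] at hr
    refine ⟨⟨by simp, ?_, ?_⟩, ?_, ?_⟩
    · rw [IsChain, List.chain'_append]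
      refine ⟨hc.2.1, hc.1, ?_⟩
      intro p hp q hq
      simp at hq; subst hq
      apply hcl x p hha
      rw [hgb]; exact hp
    · intro e f hef hfl
      simp at hef; subst hef
      have hfl' : ((y :: b') ++ x :: a').getLast? = (x :: a').getLast? := by
        rw [List.getLast?_append_of_ne_nil]; simp
      rw [hfl'] at hfl
      exact hc.2.2 f hfl y rfl
    · rw [List.chain'_append]
      refine ⟨hr.2.1, hr.1, ?_⟩
      intro p hp q hq
      simp at hq; subst hq
      apply hrl x p hha
      rw [hgb]; exact hp
    · intro e f hef hfl
      simp at hef; subst hef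
      have hfl' : ((y :: b') ++ x :: a').getLast? = (x :: a').getLast? := by
        rw [List.getLast?_append_of_ne_nil]; simp
      rw [hfl'] at hfl
      exact hr.2.2 f hfl y rfl

/-- Split off the first element satisfying `P`. -/
theorem find_first {α : Type*} {P : α → Prop} :
    ∀ (l : List α), (∃ x ∈ l, P x) → ∃ s e t, l = s ++ e :: t ∧ P e ∧ ∀ f ∈ s, ¬ P f := by
  intro l
  induction l with
  | nil => rintro ⟨x, hx, -⟩; simp at hx
  | cons a l ih =>
    intro hex
    by_cases ha : P a
    · exact ⟨[], a, l, by simp, ha, by simp⟩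
    · obtain ⟨x, hx, hPx⟩ := hex
      rcases List.mem_cons.mp hx with rfl | hx
      · exact absurd hPx ha
      · obtain ⟨s, e, t, rfl, hPe, hs⟩ := ih ⟨x, hx, hPx⟩
        refine ⟨a :: s, e, t, by simp, hPe, ?_⟩
        rintro f hf
        rcases List.mem_cons.mp hf with rfl | hf
        · exact ha
        · exact hs f hf

end SGraph
namespace SGraph

variable {G : SGraph}

theorem cancelAux :
    ∀ (n : ℕ) (σ : List G.E), σ.length ≤ n → σ ≠ [] →
    G.IsChain σ → List.Chain' (fun e f => f ≠ G.bar e) σ →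
    (∀ e f, σ.head? = some e → σ.getLast? = some f → G.term f = G.init e) →
    ∃ c, G.IsReducedCycle c ∧ ∀ x ∈ c, x ∈ σ := by
  intro n
  induction n with
  | zero =>
    intro σ hl hne
    rw [Nat.le_zero, List.length_eq_zero_iff] at hl
    exact absurd hl hne
  | succ n ih =>
    intro σ hl hne hc hr hcl
    match σ with
    | [e] =>
      refine ⟨[e], ⟨⟨by simp, by simp [IsChain], ?_⟩, by simp, ?_⟩, by simp⟩
      · intro a b ha hb
        obtain rfl : e = a := by simpa using ha
        obtain rfl : e = b := by simpa using hb
        exact hcl e e rfl rfl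
      · intro a b ha hb
        obtain rfl : e = a := by simpa using ha
        obtain rfl : e = b := by simpa using hb
        exact fun h => G.bar_ne e h.symm
    | e :: g :: t =>
      obtain ⟨mid, f, hmid⟩ : ∃ mid f, g :: t = mid ++ [f] := by
        rcases List.eq_nil_or_concat (g :: t) with h | ⟨mid, f, h⟩
        · simp at h
        · exact ⟨mid, f, by simpa [List.concat_eq_append] using h⟩
      have hfl : (e :: g :: t).getLast? = some f := by
        rw [List.getLast?_cons_cons, hmid, List.getLast?_concat]
      by_cases hef : e = G.bar f
      · -- cancel the outer pair
        match mid, hmid with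
        | [], hmid =>
          simp at hmid
          obtain ⟨rfl, rfl⟩ := hmid
          have hfe : g ≠ G.bar e := (List.chain'_cons.mp hr).1
          exact absurd (by rw [hef, G.bar_bar]) hfe
        | m :: mid', hmid =>
          have hσ : e :: g :: t = e :: ((m :: mid') ++ [f]) := by rw [hmid]
          rw [hσ] at hc hr hl ⊢
          have hcm := hc.tail
          have hrm := hr.tail
          simp only [List.tail_cons] at hcm hrm
          rw [List.chain'_append] at hcm
          rw [List.chain'_append] at hrm
          have hclm : ∀ a b, (m :: mid').head? = some a → (m :: mid').getLast? = some b →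
              G.term b = G.init a := by
            intro a b ha hb
            obtain rfl : m = a := by simpa using ha
            have h1 : G.term b = G.init f := hcm.2.2 b hb f rfl
            have h2 : G.init f = G.term e := by rw [hef, term_bar]
            have h3 : G.term e = G.init m := by
              have := (List.chain'_cons.mp hc).1
              simpa using this
            rw [h1, h2, h3]
          obtain ⟨c, hcyc, hsub⟩ := ih (m :: mid') (by simp at hl ⊢; omega) (by simp)
            hcm.1 hrm.1 hclm
          refine ⟨c, hcyc, fun x hx => ?_⟩
          have := hsub x hx
          simp at this ⊢
          tauto
      · -- σ itself is a reduced cycle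
        refine ⟨e :: g :: t, ⟨⟨by simp, hc, hcl⟩, hr, ?_⟩, by simp⟩
        intro a b ha hb
        obtain rfl : e = a := by simpa using ha
        rw [hfl] at hb
        exact (Option.some_inj.mp hb) ▸ hef

end SGraph
namespace SGraph

variable {G : SGraph}

open Classical in
theorem quot_init_def (Λ' : Subgraph G) (e : (G.quot Λ').E) :
    (G.quot Λ').init e =
      if h : G.init e.1 ∈ Λ'.verts then none else some ⟨G.init e.1, h⟩ := rfl

open Classical in
theorem quot_term_def (Λ' : Subgraph G) (e : (G.quot Λ').E) :
    (G.quot Λ').term e =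
      if h : G.term e.1 ∈ Λ'.verts then none else some ⟨G.term e.1, h⟩ := rfl

theorem quot_init_none {Λ' : Subgraph G} {e : (G.quot Λ').E}
    (h : (G.quot Λ').init e = none) : G.init e.1 ∈ Λ'.verts := by
  rw [quot_init_def] at h
  by_contra hc
  rw [dif_neg hc] at h
  exact Option.some_ne_none _ h

theorem quot_term_none {Λ' : Subgraph G} {e : (G.quot Λ').E}
    (h : (G.quot Λ').term e = none) : G.term e.1 ∈ Λ'.verts := by
  rw [quot_term_def] at h
  by_contra hc
  rw [dif_neg hc] at h
  exact Option.some_ne_none _ h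

theorem quot_init_none_of_mem {Λ' : Subgraph G} {e : (G.quot Λ').E}
    (h : G.init e.1 ∈ Λ'.verts) : (G.quot Λ').init e = none := by
  rw [quot_init_def, dif_pos h]

theorem quot_match {Λ' : Subgraph G} {e f : (G.quot Λ').E}
    (hef : (G.quot Λ').term e = (G.quot Λ').init f)
    (hf : (G.quot Λ').init f ≠ none) : G.term e.1 = G.init f.1 := by
  rw [quot_init_def] at hef hf
  rw [quot_term_def] at hef
  by_cases h1 : G.init f.1 ∈ Λ'.verts
  · rw [dif_pos h1] at hf; exact absurd rfl hf
  · rw [dif_neg h1] at hef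
    by_cases h2 : G.term e.1 ∈ Λ'.verts
    · rw [dif_pos h2] at hef; exact absurd hef.symm (Option.some_ne_none _)
    · rw [dif_neg h2] at hef
      exact congrArg Subtype.val (Option.some_inj.mp hef)

theorem quot_bar_ne {Λ' : Subgraph G} {e f : (G.quot Λ').E}
    (h : f ≠ (G.quot Λ').bar e) : f.1 ≠ G.bar e.1 := by
  intro hval
  exact h (Subtype.ext hval)

theorem bar_not_mem {Λ' : Subgraph G} {e : G.E} (h : e ∉ Λ'.edges) :
    G.bar e ∉ Λ'.edges := by
  intro hc
  exact h (by simpa [G.bar_bar] using Λ'.bar_mem hc)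

/-- The central contradiction: a nonempty reduced chain outside `Λ'` whose
endpoints lie in `Λ'.verts` contradicts the strong relative forest property. -/
theorem mem_of_getLast?' {α : Type*} {l : List α} {a : α} (h : l.getLast? = some a) :
    a ∈ l := by
  cases l with
  | nil => simp at h
  | cons x t =>
    rw [List.getLast?_eq_getLast (by simp)] at h
    rw [← Option.some_inj.mp h]
    exact List.getLast_mem _

theorem mem_of_head?' {α : Type*} {l : List α} {a : α} (h : l.head? = some a) :
    a ∈ l := by
  cases l with
  | nil => simp at h
  | cons x t =>
    simp at h
    simp [h]

theorem seg_contra {Λ' : Subgraph G} (h : (G.full).StrongForestRel Λ')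
    (σ : List G.E) (hne : σ ≠ [])
    (hS : ∀ x ∈ σ, x ∉ Λ'.edges)
    (hc : G.IsChain σ)
    (hr : List.Chain' (fun e f => f ≠ G.bar e) σ)
    (hh : ∀ e, σ.head? = some e → G.init e ∈ Λ'.verts)
    (hl : ∀ e, σ.getLast? = some e → G.term e ∈ Λ'.verts) : False := by
  obtain ⟨e0, he0⟩ : ∃ e0, σ.head? = some e0 := ⟨_, List.head?_eq_head hne⟩
  obtain ⟨e1, he1⟩ : ∃ e1, σ.getLast? = some e1 := ⟨_, List.getLast?_eq_getLast hne⟩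
  set b := G.init e0 with hb
  set a := G.term e1 with ha
  have hwσ : G.Walk Set.univ b a σ := by
    refine ⟨fun x _ => Set.mem_univ x, hc, ?_, ?_, fun hx => absurd hx hne⟩
    · intro e he; rw [he0] at he; rw [Option.some_inj.mp he] at hb; exact hb.symm ▸ rfl
    · intro e he; rw [he1] at he; rw [Option.some_inj.mp he] at ha; exact ha.symm ▸ rfl
  have hreach : (G.full).Reaches b a := reaches_of_walk hwσ
  have hbC : b ∈ (G.comp b).verts := Subgraph.Reaches.refl b (Set.mem_univ b)
  have haC : a ∈ (G.comp b).verts := hreach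
  have hbv : b ∈ Λ'.verts := hh e0 he0
  have hav : a ∈ Λ'.verts := hl e1 he1
  rcases h.2 (G.comp b) (comp_isCompOf b) with hemp | hconn
  · exact absurd hemp (by
      rw [Set.eq_empty_iff_forall_notMem]
      push_neg
      exact ⟨b, hbC, hbv⟩)
  · have hreach2 : ((G.comp b).inter Λ').Reaches a b := hconn.2 a ⟨haC, hav⟩ b ⟨hbC, hbv⟩
    obtain ⟨π₀, hπ₀⟩ := walk_of_reaches hreach2
    obtain ⟨π, hπ, hπred⟩ := reduce_walk π₀.length π₀ le_rfl a b hπ₀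
    obtain ⟨hπS, hπc, hπh, hπl, hπe⟩ := hπ
    have hπS' : ∀ x ∈ π, x ∈ Λ'.edges := fun x hx => (hπS x hx).2
    match π, hπred with
    | [], _ =>
      have hab : a = b := hπe rfl
      obtain ⟨c, hcyc, hsub⟩ := cancelAux σ.length σ le_rfl hne hc hr (by
        intro e f hee hff
        rw [he0] at hee; rw [he1] at hff
        rw [← Option.some_inj.mp hee, ← Option.some_inj.mp hff]
        rw [← ha, ← hb, hab])
      have hin := h.1 c ⟨hcyc, fun x _ => Set.mem_univ x⟩
      obtain ⟨x0, hx0⟩ : ∃ x0, x0 ∈ c := by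
        cases hc' : c with
        | nil => exact absurd hc' hcyc.1.1
        | cons y s => exact ⟨y, by simp [hc']⟩
      exact hS x0 (hsub x0 hx0) (hin x0 hx0)
    | g :: r, hπred =>
      have hga : G.init g = a := hπh g rfl
      have hcyc : G.IsReducedCycle (σ ++ g :: r) := by
        have hgl : (σ ++ g :: r).getLast? = (g :: r).getLast? :=
          List.getLast?_append_of_ne_nil _ (by simp)
        have hhd : (σ ++ g :: r).head? = some e0 := by
          rw [List.head?_append_of_ne_nil _ hne] at *
          exact he0
        refine ⟨⟨by simp, ?_, ?_⟩, ?_, ?_⟩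
        · rw [IsChain, List.chain'_append]
          refine ⟨hc, hπc, ?_⟩
          intro x hx y hy
          simp at hy; subst hy
          rw [he1] at hx
          rw [← Option.some_inj.mp hx, hga, ha]
        · intro e f hee hff
          rw [hhd] at hee
          rw [hgl] at hff
          rw [← Option.some_inj.mp hee, hπl f hff, hb]
        · rw [List.chain'_append]
          refine ⟨hr, hπred, ?_⟩
          intro x hx y hy
          simp at hy; subst hy
          have hx' : x ∈ σ := by
            rw [he1] at hx
            rw [← Option.some_inj.mp hx]
            exact mem_of_getLast?' he1
          intro hcon
          exact bar_not_mem (hS x hx') (by rw [← hcon]; exact hπS' g (by simp))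
        · intro e f hee hff
          rw [hhd] at hee
          rw [hgl] at hff
          have hfΛ : f ∈ Λ'.edges := hπS' f (by
            exact mem_of_getLast?' hff)
          intro hcon
          have he0σ : e ∈ σ := by
            rw [← Option.some_inj.mp hee]
            exact mem_of_head?' he0
          exact hS e he0σ (by rw [hcon]; exact Λ'.bar_mem hfΛ)
      have hin := h.1 (σ ++ g :: r) ⟨hcyc, fun x _ => Set.mem_univ x⟩
      obtain ⟨x0, hx0⟩ : ∃ x0, x0 ∈ σ := by
        cases hσ' : σ with
        | nil => exact absurd hσ' hne
        | cons y s => exact ⟨y, by simp [hσ']⟩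
      exact hS x0 hx0 (hin x0 (by simp [hx0]))

end SGraph
namespace SGraph

variable {G : SGraph}

theorem chain'_mem {α : Type*} {R : α → α → Prop} {l : List α} (h : List.Chain' R l) :
    List.Chain' (fun a b => R a b ∧ a ∈ l ∧ b ∈ l) l := by
  rw [List.chain'_iff_get] at h ⊢
  intro i hi
  exact ⟨h i hi, List.get_mem _ _, List.get_mem _ _⟩

theorem nebar_map {Λ' : Subgraph G} {s : List (G.quot Λ').E}
    (h : List.Chain' (fun e f => f ≠ (G.quot Λ').bar e) s) :
    List.Chain' (fun e f => f ≠ G.bar e) (s.map (fun e => e.1)) := by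
  rw [List.chain'_map]
  exact List.Chain'.imp (fun a b hab => quot_bar_ne hab) h

theorem seg_chain {Λ' : Subgraph G} :
    ∀ (s : List (G.quot Λ').E) (x : (G.quot Λ').E),
      (G.quot Λ').IsChain (s ++ [x]) → (∀ f ∈ s, (G.quot Λ').term f ≠ none) →
      List.Chain' (fun e f => G.term e = G.init f) ((s ++ [x]).map (fun e => e.1)) := by
  intro s
  induction s with
  | nil => intro x _ _; simp
  | cons p s' ih =>
    intro x hc hnn
    obtain ⟨q, hq, hq2⟩ : ∃ q, (s' ++ [x]).head? = some q ∧
        ((s' ++ [x]).map (fun e => e.1)).head? = some q.1 := by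
      cases s' <;> simp
    have hpq : (G.quot Λ').term p = (G.quot Λ').init q := by
      have h2 := List.chain'_cons'.mp hc
      exact h2.1 q hq
    have hpn : (G.quot Λ').term p ≠ none := hnn p (by simp)
    have hG : G.term p.1 = G.init q.1 := quot_match hpq (by rw [← hpq]; exact hpn)
    have ht := ih x (List.chain'_cons'.mp hc).2 (fun f hf => hnn f (by simp [hf]))
    rw [List.cons_append, List.map_cons, List.chain'_cons']
    refine ⟨?_, ht⟩
    intro y hy
    rw [hq2] at hy
    rw [← Option.some_inj.mp hy]
    exact hG

end SGraph

open SGraph in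
open Classical in
theorem quot_forest_of_strong_forest_rel'
    (G : SGraph)
    (Λ' : SGraph.Subgraph G)
    (h : (G.full).StrongForestRel Λ') :
    (G.quot Λ').IsForestGraph := by
  intro l hcyc
  have hne : l ≠ [] := hcyc.1.1
  by_cases hex : ∃ e ∈ l, (G.quot Λ').init e = none
  · -- the cycle passes through ∗ : rotate and take the first segment
    obtain ⟨e, hel, hen⟩ := hex
    obtain ⟨u, w, rfl⟩ := List.append_of_mem hel
    have hm : (G.quot Λ').IsReducedCycle ((e :: w) ++ u) := rot hcyc
    set m := (e :: w) ++ u with hmdef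
    have hmne : m ≠ [] := by simp [hmdef]
    have hmhd : m.head? = some e := by simp [hmdef]
    obtain ⟨f0, hf0⟩ : ∃ f0, m.getLast? = some f0 := ⟨_, List.getLast?_eq_getLast hmne⟩
    have hPlast : (G.quot Λ').term f0 = none := by
      rw [hm.1.2.2 e f0 hmhd hf0, hen]
    obtain ⟨s, x, t, hsplit, hPx, hs⟩ :=
      find_first (P := fun y => (G.quot Λ').term y = none) m ⟨f0, mem_of_getLast?' hf0, hPlast⟩
    have hpre : (s ++ [x]) <+: m := ⟨t, by rw [hsplit]; simp⟩
    have hcseg : (G.quot Λ').IsChain (s ++ [x]) := List.Chain'.prefix hm.1.2.1 hpre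
    have hrseg : List.Chain' (fun a b => b ≠ (G.quot Λ').bar a) (s ++ [x]) :=
      List.Chain'.prefix hm.2.1 hpre
    set σ := (s ++ [x]).map (fun y => y.1) with hσdef
    refine seg_contra h σ (by simp [hσdef]) ?_ ?_ ?_ ?_ ?_
    · intro y hy
      simp only [hσdef, List.mem_map] at hy
      obtain ⟨z, _, rfl⟩ := hy
      exact z.2
    · exact seg_chain s x hcseg (fun f hf => hs f hf)
    · exact nebar_map hrseg
    · intro y hy
      have hhd : (s ++ [x]).head? = some e := by
        have : m.head? = (s ++ [x]).head? := by
          rw [hsplit, show s ++ x :: t = (s ++ [x]) ++ t by simp]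
          rw [List.head?_append_of_ne_nil _ (by simp)]
        rw [← this, hmhd]
      rw [hσdef, List.head?_map, hhd] at hy
      simp only [Option.map_some] at hy
      rw [← Option.some_inj.mp hy]
      exact quot_init_none hen
    · intro y hy
      have hlst : σ.getLast? = some x.1 := by
        simp only [hσdef, List.map_append, List.map_cons, List.map_nil, List.getLast?_concat]
      rw [hlst] at hy
      rw [← Option.some_inj.mp hy]
      exact quot_term_none hPx
  · -- the cycle avoids ∗ : it lifts to a reduced cycle of G
    have hex' : ∀ e ∈ l, (G.quot Λ').init e ≠ none := fun e hel hn => hex ⟨e, hel, hn⟩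
    set σ := l.map (fun y => y.1) with hσdef
    obtain ⟨e0, he0⟩ : ∃ e0, l.head? = some e0 := ⟨_, List.head?_eq_head hne⟩
    obtain ⟨e1, he1⟩ : ∃ e1, l.getLast? = some e1 := ⟨_, List.getLast?_eq_getLast hne⟩
    have hσhd : σ.head? = some e0.1 := by rw [hσdef, List.head?_map, he0]; rfl
    have hσlst : σ.getLast? = some e1.1 := by rw [hσdef, List.getLast?_map, he1]; rfl
    have hcycG : G.IsReducedCycle σ := by
      refine ⟨⟨by simp [hσdef, hne], ?_, ?_⟩, ?_, ?_⟩
      · show List.Chain' (fun a b => G.term a = G.init b) σ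
        rw [hσdef, List.chain'_map]
        refine List.Chain'.imp ?_ (chain'_mem hcyc.1.2.1)
        rintro a b ⟨hab, -, hbl⟩
        exact quot_match hab (hex' b hbl)
      · intro a b ha hb
        rw [hσhd] at ha; rw [hσlst] at hb
        rw [← Option.some_inj.mp ha, ← Option.some_inj.mp hb]
        exact quot_match (hcyc.1.2.2 e0 e1 he0 he1) (hex' e0 (mem_of_head?' he0))
      · exact nebar_map hcyc.2.1
      · intro a b ha hb
        rw [hσhd] at ha; rw [hσlst] at hb
        rw [← Option.some_inj.mp ha, ← Option.some_inj.mp hb]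
        exact quot_bar_ne (hcyc.2.2 e0 e1 he0 he1)
    have hin := h.1 σ ⟨hcycG, fun y _ => Set.mem_univ y⟩
    exact e0.2 (hin e0.1 (by rw [hσdef]; exact List.mem_map_of_mem (mem_of_head?' he0)))

/-- If `Λ` (here: the full subgraph of `G`) is a strong forest
relative to a subgraph `Λ'`, then the quotient graph `Λ/Λ'` is a forest. -/
theorem quot_forest_of_strong_forest_rel
    (G : SGraph) [Fintype G.V] [Fintype G.E]
    (Λ' : SGraph.Subgraph G)
    (h : (G.full).StrongForestRel Λ') :
    (G.quot Λ').IsForestGraph := by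
  exact quot_forest_of_strong_forest_rel' G Λ' h
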